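/- For each prime p let Ω(p) be a proper nonempty set of residue classes mod p, and let U(θ; p, a) = ∑_{M ≤ n < M+N, n ≡ a (mod p)} ϖ(n) e(nθ), where ϖ is the characteristic function of integers avoiding Ω(p) for all primes p < z. Then for any prime p < z and any real θ, |U(θ)|² · |Ω(p)|/(p − |Ω(p)|) ≤ ∑_{a=1}^{p−1} |U(θ + a/p)|², where U(θ) = ∑_{M ≤ n < M+N} ϖ(n) e(nθ). -/

import Mathlib

open Finset Complex

lemma geo_sum (p : ℕ) (hp : 0 < p) (k : ℤ) :
    ∑ a ∈ Finset.range p, Complex.exp (2 * Real.pi * Complex.I * k * a / p) =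
    if (p:ℤ) ∣ k then (p:ℂ) else 0 := by
  have hpc : (p:ℂ) ≠ 0 := Nat.cast_ne_zero.2 hp.ne'
  have hω : ∀ a : ℕ, Complex.exp (2 * Real.pi * Complex.I * k * a / p)
      = Complex.exp (2 * Real.pi * Complex.I * k / p) ^ a := by
    intro a
    rw [← Complex.exp_nat_mul]
    ring_nf
  simp only [hω]
  by_cases hdvd : (p:ℤ) ∣ k
  · rw [if_pos hdvd]
    obtain ⟨m, hm⟩ := hdvd
    have h1 : Complex.exp (2 * Real.pi * Complex.I * k / p) = 1 := by
      have he : (2 * Real.pi * Complex.I * k / p : ℂ) = (m:ℤ) * (2 * Real.pi * Complex.I) := by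
        rw [hm]
        push_cast
        field_simp
      rw [he, Complex.exp_int_mul_two_pi_mul_I]
    simp [h1]
  · rw [if_neg hdvd]
    have hω1 : Complex.exp (2 * Real.pi * Complex.I * k / p) ≠ 1 := by
      intro h
      rw [Complex.exp_eq_one_iff] at h
      obtain ⟨n, hn⟩ := h
      apply hdvd
      have h2 : (k : ℂ) = n * p := by
        have h3 : (k:ℂ) * (2 * Real.pi * Complex.I) = (n * p) * (2 * Real.pi * Complex.I) := by
          have h4 : (2 * Real.pi * Complex.I * k / p : ℂ) * p = ((n:ℂ) * (2 * Real.pi * Complex.I)) * p := by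
            rw [hn]
          field_simp at h4
          rw [show (k:ℂ) * (2 * Real.pi * Complex.I) = 2 * Real.pi * Complex.I * k by ring, h4]
          ring
        exact mul_right_cancel₀ Complex.two_pi_I_ne_zero h3
      have h5 : k = n * (p:ℤ) := by exact_mod_cast h2
      exact ⟨n, by rw [h5]; ring⟩
    rw [geom_sum_eq hω1]
    have hωp : Complex.exp (2 * Real.pi * Complex.I * k / p) ^ p = 1 := by
      rw [← Complex.exp_nat_mul]
      have he : (p:ℂ) * (2 * Real.pi * Complex.I * k / p) = (k:ℤ) * (2 * Real.pi * Complex.I) := by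
        push_cast
        field_simp
      rw [he, Complex.exp_int_mul_two_pi_mul_I]
    rw [hωp]
    simp

open scoped Classical in
lemma fiber_sum (p : ℕ) [NeZero p] (T : Finset ℤ) (f g : ℤ → ℂ) :
    ∑ b : ZMod p, (∑ n ∈ T, if (n : ZMod p) = b then f n else 0) *
        (∑ m ∈ T, if (m : ZMod p) = b then g m else 0)
    = ∑ n ∈ T, ∑ m ∈ T, if (n : ZMod p) = (m : ZMod p) then f n * g m else 0 := by
  have key : ∀ (n m : ℤ) (b : ZMod p),
      (if (n : ZMod p) = b then f n else 0) * (if (m : ZMod p) = b then g m else 0)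
      = if b = (n : ZMod p) then (if (n : ZMod p) = (m : ZMod p) then f n * g m else 0) else 0 := by
    intro n m b
    by_cases h1 : (n : ZMod p) = b <;> by_cases h2 : (m : ZMod p) = b
    · subst h1; simp [h2.symm]
    · subst h1
      rw [if_neg h2, mul_zero, if_pos rfl, if_neg (fun h => h2 h.symm)]
    · subst h2
      rw [if_neg h1, zero_mul, if_neg (fun h : (m:ZMod p) = (n:ZMod p) => h1 h.symm)]
    · rw [if_neg h1, zero_mul, if_neg (fun h : b = (n:ZMod p) => h1 h.symm)]
  have expand : ∀ n m : ℤ, (if (n : ZMod p) = (m : ZMod p) then f n * g m else 0)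
      = ∑ b : ZMod p, (if (n : ZMod p) = b then f n else 0) *
          (if (m : ZMod p) = b then g m else 0) := by
    intro n m
    rw [Finset.sum_congr rfl fun b _ => key n m b,
      Finset.sum_ite_eq' Finset.univ ((n : ZMod p)), if_pos (Finset.mem_univ _)]
  calc ∑ b : ZMod p, (∑ n ∈ T, if (n : ZMod p) = b then f n else 0) *
        (∑ m ∈ T, if (m : ZMod p) = b then g m else 0)
      = ∑ b : ZMod p, ∑ n ∈ T, ∑ m ∈ T,
          (if (n : ZMod p) = b then f n else 0) * (if (m : ZMod p) = b then g m else 0) := by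
        refine Finset.sum_congr rfl fun b _ => ?_
        rw [Finset.sum_mul]
        exact Finset.sum_congr rfl fun n _ => by rw [Finset.mul_sum]
    _ = ∑ n ∈ T, ∑ m ∈ T, ∑ b : ZMod p,
          (if (n : ZMod p) = b then f n else 0) * (if (m : ZMod p) = b then g m else 0) := by
        rw [Finset.sum_comm]
        exact Finset.sum_congr rfl fun n _ => Finset.sum_comm
    _ = ∑ n ∈ T, ∑ m ∈ T, if (n : ZMod p) = (m : ZMod p) then f n * g m else 0 :=
        Finset.sum_congr rfl fun n _ => Finset.sum_congr rfl fun m _ => (expand n m).symm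

open scoped Classical in
theorem linnik_farey_inequality (z : ℕ) (Ω : (p : ℕ) → Finset (ZMod p))
    (hΩ : ∀ p : ℕ, p.Prime → p < z → 0 < (Ω p).card ∧ (Ω p).card < p)
    (M : ℤ) (N : ℕ) (ϖ : ℤ → ℂ)
    (hϖ : ∀ n : ℤ, ϖ n =
      if ∀ p : ℕ, p.Prime → p < z → (n : ZMod p) ∉ Ω p then 1 else 0)
    (U : ℝ → ℂ)
    (hU : ∀ θ : ℝ, U θ = ∑ n ∈ Finset.Ico M (M + N),
      ϖ n * Complex.exp (2 * Real.pi * Complex.I * n * θ))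
    (p : ℕ) (hp : p.Prime) (hpz : p < z) (θ : ℝ) :
    ‖U θ‖ ^ 2 * (((Ω p).card : ℝ) / ((p : ℝ) - (Ω p).card)) ≤
      ∑ a ∈ Finset.Ico 1 p, ‖U (θ + (a : ℝ) / p)‖ ^ 2 := by
  haveI : NeZero p := ⟨hp.ne_zero⟩
  have hppos : 0 < p := hp.pos
  have hpc : (p : ℂ) ≠ 0 := Nat.cast_ne_zero.2 hp.pos.ne'
  obtain ⟨hk0, hkp⟩ := hΩ p hp hpz
  set T := Finset.Ico M (M + N) with hT
  set f : ℤ → ℂ := fun n => ϖ n * Complex.exp (2 * Real.pi * Complex.I * n * θ) with hf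
  set V : ZMod p → ℂ := fun b => ∑ n ∈ T, if (n : ZMod p) = b then f n else 0 with hV
  -- step 1 : expand U(θ+a/p)
  have hS : ∀ a : ℕ, U (θ + (a:ℝ)/p) =
      ∑ n ∈ T, f n * Complex.exp (2 * Real.pi * Complex.I * n * a / p) := by
    intro a
    rw [hU]
    refine Finset.sum_congr rfl fun n _ => ?_
    simp only [hf]
    have he : Complex.exp (2 * Real.pi * Complex.I * n * ((θ + (a:ℝ)/p : ℝ) : ℂ))
        = Complex.exp (2 * Real.pi * Complex.I * n * θ) *
          Complex.exp (2 * Real.pi * Complex.I * n * a / p) := by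
      rw [← Complex.exp_add]
      congr 1
      push_cast
      ring
    rw [he]
    ring
  -- step 2 : conjugate expansion
  have hconj : ∀ a : ℕ, (starRingEnd ℂ) (U (θ + (a:ℝ)/p)) =
      ∑ m ∈ T, (starRingEnd ℂ) (f m) *
        Complex.exp (-(2 * Real.pi * Complex.I * m * a / p)) := by
    intro a
    rw [hS, map_sum]
    refine Finset.sum_congr rfl fun m _ => ?_
    rw [map_mul]
    congr 1
    rw [← Complex.exp_conj]
    congr 1
    simp [map_div₀, Complex.conj_I, map_ofNat]
    ring
  -- step 3 : complex Parseval
  have hParC : ∑ a ∈ Finset.range p,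
      U (θ + (a:ℝ)/p) * (starRingEnd ℂ) (U (θ + (a:ℝ)/p))
      = (p:ℂ) * ∑ b : ZMod p, V b * (starRingEnd ℂ) (V b) := by
    have expand : ∀ a : ℕ, U (θ + (a:ℝ)/p) * (starRingEnd ℂ) (U (θ + (a:ℝ)/p)) =
        ∑ n ∈ T, ∑ m ∈ T, (f n * (starRingEnd ℂ) (f m)) *
          Complex.exp (2 * Real.pi * Complex.I * ((n:ℤ) - (m:ℤ)) * a / p) := by
      intro a
      rw [hconj, hS, Finset.sum_mul_sum]
      refine Finset.sum_congr rfl fun n _ => Finset.sum_congr rfl fun m _ => ?_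
      rw [mul_mul_mul_comm, ← Complex.exp_add]
      congr 1
      push_cast
      ring
    simp only [expand]
    rw [Finset.sum_comm]
    have inner : ∀ n ∈ T, ∑ a ∈ Finset.range p, ∑ m ∈ T,
        (f n * (starRingEnd ℂ) (f m)) *
          Complex.exp (2 * Real.pi * Complex.I * ((n:ℤ) - (m:ℤ)) * a / p)
        = ∑ m ∈ T, (p:ℂ) *
          (if (n : ZMod p) = (m : ZMod p) then f n * (starRingEnd ℂ) (f m) else 0) := by
      intro n _
      rw [Finset.sum_comm]
      refine Finset.sum_congr rfl fun m _ => ?_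
      rw [← Finset.mul_sum]
      have harg : ∀ a : ℕ, Complex.exp (2 * Real.pi * Complex.I * ((n:ℤ) - (m:ℤ)) * a / p)
          = Complex.exp (2 * Real.pi * Complex.I * (((n - m : ℤ)):ℂ) * a / p) := by
        intro a; congr 1; push_cast; ring
      simp only [harg]
      rw [geo_sum p hppos (n - m)]
      have hiff : ((n : ZMod p) = (m : ZMod p)) ↔ (p:ℤ) ∣ (n - m) := by
        rw [ZMod.intCast_eq_intCast_iff]
        constructor
        · intro h; exact Int.ModEq.dvd h.symm
        · intro h; exact (Int.modEq_iff_dvd.2 h).symm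
      by_cases hd : (p:ℤ) ∣ (n - m)
      · rw [if_pos hd, if_pos (hiff.2 hd)]; ring
      · rw [if_neg hd, if_neg (fun h => hd (hiff.1 h))]; ring
    rw [Finset.sum_congr rfl inner]
    simp only [← Finset.mul_sum]
    rw [← fiber_sum p T f (fun m => (starRingEnd ℂ) (f m))]
    congr 1
    refine Finset.sum_congr rfl fun b _ => ?_
    simp only [hV]
    congr 1
    rw [map_sum]
    refine Finset.sum_congr rfl fun m _ => ?_
    rw [apply_ite (starRingEnd ℂ), map_zero]
  -- step 4 : real Parseval
  have hParR : ∑ a ∈ Finset.range p, ‖U (θ + (a:ℝ)/p)‖ ^ 2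
      = (p:ℝ) * ∑ b : ZMod p, ‖V b‖ ^ 2 := by
    have hnorm : ∀ z : ℂ, ‖z‖ ^ 2 = Complex.normSq z := fun z => by
      rw [Complex.sq_norm]
    simp only [hnorm]
    have := hParC
    simp only [Complex.mul_conj] at this
    exact_mod_cast this
  -- step 5 : U θ = sum of fibers, vanishing on Ω p
  have hVΩ : ∀ b ∈ Ω p, V b = 0 := by
    intro b hb
    rw [hV]
    refine Finset.sum_eq_zero fun n _ => ?_
    by_cases h : (n : ZMod p) = b
    · rw [if_pos h]
      have : ϖ n = 0 := by
        rw [hϖ, if_neg]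
        intro hall
        exact hall p hp hpz (h ▸ hb)
      simp [hf, this]
    · rw [if_neg h]
  have hUV : U θ = ∑ b ∈ Finset.univ \ Ω p, V b := by
    rw [hU]
    have h1 : (∑ b : ZMod p, V b) = ∑ n ∈ T, f n := by
      rw [hV, Finset.sum_comm]
      refine Finset.sum_congr rfl fun n _ => ?_
      simp
    rw [show (∑ n ∈ T, ϖ n * Complex.exp (2 * Real.pi * Complex.I * n * θ)) = ∑ n ∈ T, f n from rfl,
      ← h1]
    exact (Finset.sum_subset (Finset.sdiff_subset) (fun b _ hb => hVΩ b (by simpa using hb))).symm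
  -- step 6 : Cauchy-Schwarz
  have hCS : ‖U θ‖ ^ 2 ≤ ((p:ℝ) - (Ω p).card) * ∑ b : ZMod p, ‖V b‖ ^ 2 := by
    have h1 : ‖U θ‖ ≤ ∑ b ∈ Finset.univ \ Ω p, ‖V b‖ := by
      rw [hUV]; exact norm_sum_le _ _
    have h2 : ‖U θ‖ ^ 2 ≤ (∑ b ∈ Finset.univ \ Ω p, ‖V b‖) ^ 2 :=
      pow_le_pow_left₀ (norm_nonneg _) h1 2
    have h3 : (∑ b ∈ Finset.univ \ Ω p, ‖V b‖) ^ 2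
        ≤ (Finset.univ \ Ω p).card * ∑ b ∈ Finset.univ \ Ω p, ‖V b‖ ^ 2 :=
      sq_sum_le_card_mul_sum_sq
    have hcard : ((Finset.univ \ Ω p).card : ℝ) = (p:ℝ) - (Ω p).card := by
      rw [Finset.card_sdiff_of_subset (Finset.subset_univ _)]
      rw [Nat.cast_sub (by simpa [ZMod.card] using (Finset.card_le_univ (Ω p)))]
      simp [ZMod.card]
    have h4 : ∑ b ∈ Finset.univ \ Ω p, ‖V b‖ ^ 2 ≤ ∑ b : ZMod p, ‖V b‖ ^ 2 :=
      Finset.sum_le_sum_of_subset_of_nonneg (Finset.sdiff_subset)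
        (fun b _ _ => by positivity)
    calc ‖U θ‖ ^ 2 ≤ (Finset.univ \ Ω p).card * ∑ b ∈ Finset.univ \ Ω p, ‖V b‖ ^ 2 :=
          h2.trans h3
      _ = ((p:ℝ) - (Ω p).card) * ∑ b ∈ Finset.univ \ Ω p, ‖V b‖ ^ 2 := by rw [hcard]
      _ ≤ ((p:ℝ) - (Ω p).card) * ∑ b : ZMod p, ‖V b‖ ^ 2 := by
          apply mul_le_mul_of_nonneg_left h4
          have : ((Ω p).card : ℝ) < p := by exact_mod_cast hkp
          linarith
  -- step 7 : split off a = 0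
  have hsplit : ∑ a ∈ Finset.range p, ‖U (θ + (a:ℝ)/p)‖ ^ 2
      = ‖U θ‖ ^ 2 + ∑ a ∈ Finset.Ico 1 p, ‖U (θ + (a:ℝ)/p)‖ ^ 2 := by
    rw [Finset.range_eq_Ico, Finset.sum_eq_sum_Ico_succ_bot hppos]
    norm_num
  -- final arithmetic
  have hIco : ∑ a ∈ Finset.Ico 1 p, ‖U (θ + (a:ℝ)/p)‖ ^ 2
      = (p:ℝ) * (∑ b : ZMod p, ‖V b‖ ^ 2) - ‖U θ‖ ^ 2 := by
    rw [← hParR, hsplit]; ring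
  rw [hIco]
  set A := ‖U θ‖ ^ 2 with hA
  set S := ∑ b : ZMod p, ‖V b‖ ^ 2 with hSdef
  set k := ((Ω p).card : ℝ) with hkdef
  have hd : (0:ℝ) < (p:ℝ) - k := by
    have : ((Ω p).card : ℝ) < p := by exact_mod_cast hkp
    simpa [hkdef] using sub_pos.2 this
  have hknn : (0:ℝ) ≤ k := by positivity
  have hAnn : (0:ℝ) ≤ A := by positivity
  have heq : A * (k / ((p:ℝ) - k)) = A * k / ((p:ℝ) - k) := by ring
  rw [heq, div_le_iff₀ hd]
  nlinarith [mul_nonneg hknn (sub_nonneg.2 hCS), mul_nonneg hd.le (sub_nonneg.2 hCS)]
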